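/- Let (Ω,ρ) be a metric space, β ∈ (0,1], A ⊆ Ω a nonempty finite set, and f: Ω → [0,1] such that f(u) ≠ f(v) for some u,v ∈ A. Define F: Ω → [0,1] by F = f on A and, for each x ∈ Ω∖A, F(x) := f(u*_x) + R_x(u*_x,v*_x)·ρ(x,u*_x)^β, where (u*_x,v*_x) ∈ A×A is a maximizer of R_x(u,v) := (f(v)−f(u))/(ρ(x,v)^β+ρ(x,u)^β) over A×A. Then for every x ∈ Ω∖A one has Λ_F^β(x, Ω∖A) ≤ Λ_F^β(x, A), and in particular Λ_F^β(x, Ω) = Λ_F^β(x, A). -/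

import Mathlib

open MeasureTheory Set Metric
open scoped ENNReal NNReal

noncomputable section

/-- The `β`-hslope of `f` at `x`: `Λ_f^β(x) = sup_{y ≠ x} |f x - f y| / ρ(x,y)^β`. -/
def hslope {Ω : Type*} [MetricSpace Ω] (β : ℝ) (f : Ω → ℝ) (x : Ω) : ℝ≥0∞ :=
  ⨆ (y : Ω) (_ : y ≠ x), ENNReal.ofReal (|f x - f y| / dist x y ^ β)

/-- The average `β`-hslope of `f` with respect to `μ`: `E_{X∼μ}[Λ_f^β(X)]`. -/
def avgSlope {Ω : Type*} [MetricSpace Ω] [MeasurableSpace Ω] (μ : Measure Ω) (β : ℝ)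
    (f : Ω → ℝ) : ℝ≥0∞ :=
  ∫⁻ x, hslope β f x ∂μ

/-- The weak average `β`-hslope of `f` with respect to `μ`:
`sup_{t>0} t · μ {x : Λ_f^β(x) ≥ t}`. -/
def weakAvgSlope {Ω : Type*} [MetricSpace Ω] [MeasurableSpace Ω] (μ : Measure Ω) (β : ℝ)
    (f : Ω → ℝ) : ℝ≥0∞ :=
  ⨆ (t : ℝ) (_ : 0 < t), ENNReal.ofReal t * μ {x | ENNReal.ofReal t ≤ hslope β f x}

/-- The class `H̄öl^β_L(Ω,μ)` of measurable `[0,1]`-valued functions with average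
`β`-hslope at most `L`. -/
def avgHolderClass {Ω : Type*} [MetricSpace Ω] [MeasurableSpace Ω] (μ : Measure Ω)
    (β L : ℝ) : Set (Ω → ℝ) :=
  {f | Measurable f ∧ (∀ x, f x ∈ Icc (0:ℝ) 1) ∧ avgSlope μ β f ≤ ENNReal.ofReal L}

/-- The class `H̃öl^β_L(Ω,μ)` of measurable `[0,1]`-valued functions with weak average
`β`-hslope at most `L`. -/
def weakHolderClass {Ω : Type*} [MetricSpace Ω] [MeasurableSpace Ω] (μ : Measure Ω)
    (β L : ℝ) : Set (Ω → ℝ) :=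
  {f | Measurable f ∧ (∀ x, f x ∈ Icc (0:ℝ) 1) ∧ weakAvgSlope μ β f ≤ ENNReal.ofReal L}

/-- The covering number `N_Ω(t)`: minimal cardinality of a set of points whose closed
`t`-balls cover `Ω` (`∞` if no finite cover exists). -/
def coveringNumber (Ω : Type*) [MetricSpace Ω] (t : ℝ) : ℝ≥0∞ :=
  ⨅ (A : Finset Ω) (_ : ∀ x : Ω, ∃ a ∈ A, dist x a ≤ t), (A.card : ℝ≥0∞)

/-- `B` is a finite set of `ε`-brackets (with respect to `L1(μ)`) covering `F`. -/
def IsBracketing {Ω : Type*} [MeasurableSpace Ω] (μ : Measure Ω) (F : Set (Ω → ℝ))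
    (ε : ℝ) (B : Finset ((Ω → ℝ) × (Ω → ℝ))) : Prop :=
  (∀ lu ∈ B, (∀ x, lu.1 x ∈ Icc (0:ℝ) 1 ∧ lu.2 x ∈ Icc (0:ℝ) 1) ∧
      ∫⁻ x, ENNReal.ofReal |lu.2 x - lu.1 x| ∂μ ≤ ENNReal.ofReal ε) ∧
    ∀ f ∈ F, ∃ lu ∈ B, ∀ x, lu.1 x ≤ f x ∧ f x ≤ lu.2 x

/-- The bracketing number `N_[](F, L1(μ), ε)`. -/
def bracketingNumber {Ω : Type*} [MetricSpace Ω] [MeasurableSpace Ω] (F : Set (Ω → ℝ))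
    (μ : Measure Ω) (ε : ℝ) : ℝ≥0∞ :=
  ⨅ (B : Finset ((Ω → ℝ) × (Ω → ℝ))) (_ : IsBracketing μ F ε B), (B.card : ℝ≥0∞)

/-- Logarithm of an extended-real cardinality: equals `log N` for finite natural `N`
and `∞` when `N = ∞`. -/
def elog (N : ℝ≥0∞) : ℝ≥0∞ :=
  ⨅ (m : ℕ) (_ : N ≤ (m : ℝ≥0∞)), ENNReal.ofReal (Real.log m)

/-- The `L1` risk `L_D(f) = E_{(X,Y)∼D} |f(X) − Y|`. -/
def risk {Ω : Type*} [MetricSpace Ω] [MeasurableSpace Ω] (D : Measure (Ω × ℝ))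
    (f : Ω → ℝ) : ℝ≥0∞ :=
  ∫⁻ p, ENNReal.ofReal |f p.1 - p.2| ∂D

/-- The empirical `L1` risk `L_S(f) = (1/n) Σ_i |f(X_i) − Y_i|`. -/
def empRisk {Ω : Type*} [MetricSpace Ω] {n : ℕ} (S : Fin n → Ω × ℝ) (f : Ω → ℝ) : ℝ :=
  (n : ℝ)⁻¹ * ∑ i, |f (S i).1 - (S i).2|

/-- `D` is realizable by the class `F`. -/
def Realizable {Ω : Type*} [MetricSpace Ω] [MeasurableSpace Ω] (D : Measure (Ω × ℝ))
    (F : Set (Ω → ℝ)) : Prop :=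
  ∃ f ∈ F, risk D f = 0

/-- The empirical average `β`-hslope of `f` over the sample points `X_1,…,X_n`. -/
def empAvgSlope {Ω : Type*} [MetricSpace Ω] (β : ℝ) {n : ℕ} (X : Fin n → Ω)
    (f : Ω → ℝ) : ℝ :=
  (n : ℝ)⁻¹ * ∑ i, ⨆ (j : Fin n) (_ : X j ≠ X i), |f (X i) - f (X j)| / dist (X i) (X j) ^ β


/-- The restricted `β`-slope of `g` at `x` over the set `B`. -/
def hslopeOn {Ω : Type*} [MetricSpace Ω] (β : ℝ) (g : Ω → ℝ) (x : Ω) (B : Set Ω) : ℝ≥0∞ :=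
  ⨆ (y : Ω) (_ : y ∈ B) (_ : y ≠ x), ENNReal.ofReal (|g x - g y| / dist x y ^ β)

/-- `R_x(u,v) = (f v − f u) / (ρ(x,v)^β + ρ(x,u)^β)`. -/
def pmseR {Ω : Type*} [MetricSpace Ω] (β : ℝ) (f : Ω → ℝ) (x u v : Ω) : ℝ :=
  (f v - f u) / (dist x v ^ β + dist x u ^ β)

lemma my_rpow_add_le {a b p : ℝ} (ha : 0 ≤ a) (hb : 0 ≤ b) (hp : 0 ≤ p) (hp1 : p ≤ 1) :
    (a + b) ^ p ≤ a ^ p + b ^ p := by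
  have h := NNReal.rpow_add_le_add_rpow a.toNNReal b.toNNReal hp hp1
  have h2 : (((a.toNNReal + b.toNNReal) ^ p : ℝ≥0) : ℝ) ≤
      ((a.toNNReal ^ p + b.toNNReal ^ p : ℝ≥0) : ℝ) := by exact_mod_cast h
  simpa [NNReal.coe_rpow, Real.coe_toNNReal a ha, Real.coe_toNNReal b hb] using h2

lemma my_rpow_dist_tri {Ω : Type*} [MetricSpace Ω] {β : ℝ} (hβ0 : 0 < β) (hβ1 : β ≤ 1)
    (x y v : Ω) : dist x v ^ β ≤ dist x y ^ β + dist y v ^ β := by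
  calc dist x v ^ β ≤ (dist x y + dist y v) ^ β :=
        Real.rpow_le_rpow dist_nonneg (dist_triangle x y v) hβ0.le
    _ ≤ dist x y ^ β + dist y v ^ β := my_rpow_add_le dist_nonneg dist_nonneg hβ0.le hβ1

/-- Claim II: outside `A`, the slope of the PMSE extension over
`Ω ∖ A` is controlled by its slope over `A`. -/
theorem pmse_claim_two
    {Ω : Type*} [MetricSpace Ω] (β : ℝ) (hβ0 : 0 < β) (hβ1 : β ≤ 1)
    (A : Finset Ω) (hA : A.Nonempty)
    (f : Ω → ℝ) (hf : ∀ y, f y ∈ Icc (0:ℝ) 1)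
    (hne : ∃ u ∈ A, ∃ v ∈ A, f u ≠ f v)
    (ustar vstar : Ω → Ω)
    (hu : ∀ y, y ∉ A → ustar y ∈ A) (hv : ∀ y, y ∉ A → vstar y ∈ A)
    (hmax : ∀ y, y ∉ A → ∀ u ∈ A, ∀ v ∈ A, pmseR β f y u v ≤ pmseR β f y (ustar y) (vstar y))
    (F : Ω → ℝ)
    (hFA : ∀ a ∈ A, F a = f a)
    (hFx : ∀ y, y ∉ A →
      F y = f (ustar y) + pmseR β f y (ustar y) (vstar y) * dist y (ustar y) ^ β) :
    ∀ x : Ω, x ∉ A →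
      hslopeOn β F x ((A : Set Ω)ᶜ) ≤ hslopeOn β F x (A : Set Ω) ∧
      hslopeOn β F x Set.univ = hslopeOn β F x (A : Set Ω) := by
  set R : Ω → ℝ := fun y => pmseR β f y (ustar y) (vstar y) with hR
  -- distances from outside points to A are positive
  have hdpos : ∀ y : Ω, y ∉ A → ∀ a ∈ A, (0:ℝ) < dist y a ^ β := by
    intro y hy a ha
    have hne' : y ≠ a := fun h => hy (by rw [h]; exact ha)
    exact Real.rpow_pos_of_pos (dist_pos.2 hne') β
  have hR0 : ∀ y : Ω, y ∉ A → 0 ≤ R y := by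
    intro y hy
    obtain ⟨a, ha⟩ := hA
    have h := hmax y hy a ha a ha
    simpa [hR, pmseR] using h
  have hid : ∀ y : Ω, y ∉ A →
      R y * (dist y (vstar y) ^ β + dist y (ustar y) ^ β) = f (vstar y) - f (ustar y) := by
    intro y hy
    have hd : dist y (vstar y) ^ β + dist y (ustar y) ^ β ≠ 0 := by
      have := hdpos y hy (vstar y) (hv y hy)
      have := hdpos y hy (ustar y) (hu y hy)
      positivity
    rw [hR]; simp only [pmseR]
    field_simp
  have hF2 : ∀ y : Ω, y ∉ A → F y = f (vstar y) - R y * dist y (vstar y) ^ β := by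
    intro y hy
    have h1 := hFx y hy
    have h2 := hid y hy
    rw [mul_add] at h2
    rw [h1]; rw [hR]; linarith
  -- key1 : bound over A
  have key1 : ∀ y : Ω, y ∉ A → ∀ a ∈ A, |F y - f a| ≤ R y * dist y a ^ β := by
    intro y hy a ha
    rw [abs_sub_le_iff]
    constructor
    · -- F y - f a ≤ R y * d
      have hmx := hmax y hy a ha (vstar y) (hv y hy)
      rw [pmseR] at hmx
      have hden : (0:ℝ) < dist y (vstar y) ^ β + dist y a ^ β := by
        have := hdpos y hy (vstar y) (hv y hy); have := hdpos y hy a ha; positivity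
      rw [div_le_iff₀ hden] at hmx
      have h2 := hF2 y hy
      rw [h2]
      rw [hR]; nlinarith [hid y hy]
    · -- f a - F y ≤ R y * d
      have hmx := hmax y hy (ustar y) (hu y hy) a ha
      rw [pmseR] at hmx
      have hden : (0:ℝ) < dist y a ^ β + dist y (ustar y) ^ β := by
        have := hdpos y hy (ustar y) (hu y hy); have := hdpos y hy a ha; positivity
      rw [div_le_iff₀ hden] at hmx
      have h1 := hFx y hy
      rw [h1]; rw [hR]; nlinarith
  -- key2 : one-sided bound outside A
  have key2 : ∀ x : Ω, x ∉ A → ∀ y : Ω, y ∉ A →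
      F y - F x ≤ min (R x) (R y) * dist x y ^ β := by
    intro x hx y hy
    rcases le_total (R x) (R y) with hc | hc
    · rw [min_eq_left hc]
      have h1 : f (vstar y) - F x ≤ R x * dist x (vstar y) ^ β :=
        (abs_sub_le_iff.1 (key1 x hx (vstar y) (hv y hy))).2
      have h2 := hF2 y hy
      have htri := my_rpow_dist_tri hβ0 hβ1 x y (vstar y)
      have h3 : R x * dist x (vstar y) ^ β ≤ R x * (dist x y ^ β + dist y (vstar y) ^ β) :=
        mul_le_mul_of_nonneg_left htri (hR0 x hx)
      have h4 : R x * dist y (vstar y) ^ β ≤ R y * dist y (vstar y) ^ β :=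
        mul_le_mul_of_nonneg_right hc (Real.rpow_nonneg dist_nonneg β)
      rw [h2]; nlinarith
    · rw [min_eq_right hc]
      have h1 : F y - f (ustar x) ≤ R y * dist y (ustar x) ^ β :=
        (abs_sub_le_iff.1 (key1 y hy (ustar x) (hu x hx))).1
      have h2 := hFx x hx
      have htri : dist y (ustar x) ^ β ≤ dist x y ^ β + dist x (ustar x) ^ β := by
        have := my_rpow_dist_tri hβ0 hβ1 y x (ustar x)
        rwa [dist_comm y x] at this
      have h3 : R y * dist y (ustar x) ^ β ≤ R y * (dist x y ^ β + dist x (ustar x) ^ β) :=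
        mul_le_mul_of_nonneg_left htri (hR0 y hy)
      have h4 : R y * dist x (ustar x) ^ β ≤ R x * dist x (ustar x) ^ β :=
        mul_le_mul_of_nonneg_right hc (Real.rpow_nonneg dist_nonneg β)
      rw [h2]; rw [hR] at *; nlinarith
  have key3 : ∀ x : Ω, x ∉ A → ∀ y : Ω, y ∉ A → |F x - F y| ≤ R x * dist x y ^ β := by
    intro x hx y hy
    rw [abs_sub_le_iff]
    constructor
    · have h := key2 y hy x hx
      rw [dist_comm y x] at h
      exact h.trans (mul_le_mul_of_nonneg_right (min_le_right _ _)
        (Real.rpow_nonneg dist_nonneg β))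
    · exact (key2 x hx y hy).trans (mul_le_mul_of_nonneg_right (min_le_left _ _)
        (Real.rpow_nonneg dist_nonneg β))
  intro x hx
  -- slope over A is at most R x
  have hsA_le : hslopeOn β F x (A : Set Ω) ≤ ENNReal.ofReal (R x) := by
    refine iSup_le fun y => iSup_le fun hyA => iSup_le fun hyx => ?_
    have hyA' : y ∈ A := hyA
    refine ENNReal.ofReal_le_ofReal ?_
    rw [div_le_iff₀ (hdpos x hx y hyA')]
    rw [hFA y hyA']
    exact key1 x hx y hyA'
  have hle_sA : ENNReal.ofReal (R x) ≤ hslopeOn β F x (A : Set Ω) := by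
    have huA : ustar x ∈ A := hu x hx
    have hux : ustar x ≠ x := fun h => hx (h ▸ huA)
    have hval : |F x - F (ustar x)| / dist x (ustar x) ^ β = R x := by
      rw [hFA (ustar x) huA, hFx x hx]
      have : f (ustar x) + R x * dist x (ustar x) ^ β - f (ustar x)
          = R x * dist x (ustar x) ^ β := by ring
      rw [hR]
      rw [show f (ustar x) + pmseR β f x (ustar x) (vstar x) * dist x (ustar x) ^ β - f (ustar x)
          = pmseR β f x (ustar x) (vstar x) * dist x (ustar x) ^ β by ring]
      rw [abs_of_nonneg (mul_nonneg (hR0 x hx) (Real.rpow_nonneg dist_nonneg β))]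
      exact mul_div_cancel_right₀ _ (ne_of_gt (hdpos x hx (ustar x) huA))
    calc ENNReal.ofReal (R x)
        = ENNReal.ofReal (|F x - F (ustar x)| / dist x (ustar x) ^ β) := by rw [hval]
      _ ≤ hslopeOn β F x (A : Set Ω) :=
          le_iSup_of_le (ustar x) (le_iSup_of_le (by exact_mod_cast huA)
            (le_iSup_of_le hux le_rfl))
  have hsC_le : hslopeOn β F x ((A : Set Ω)ᶜ) ≤ ENNReal.ofReal (R x) := by
    refine iSup_le fun y => iSup_le fun hyC => iSup_le fun hyx => ?_
    have hyA : y ∉ A := by simpa using hyC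
    refine ENNReal.ofReal_le_ofReal ?_
    have hd : (0:ℝ) < dist x y ^ β :=
      Real.rpow_pos_of_pos (dist_pos.2 (Ne.symm hyx)) β
    rw [div_le_iff₀ hd]
    exact key3 x hx y hyA
  refine ⟨hsC_le.trans hle_sA, le_antisymm ?_ ?_⟩
  · refine iSup_le fun y => iSup_le fun _ => iSup_le fun hyx => ?_
    by_cases hyA : y ∈ A
    · exact le_iSup_of_le y (le_iSup_of_le (by exact_mod_cast hyA) (le_iSup_of_le hyx le_rfl))
    · refine le_trans ?_ (hsC_le.trans hle_sA)
      exact le_iSup_of_le y (le_iSup_of_le (by simpa using hyA) (le_iSup_of_le hyx le_rfl))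
  · refine iSup_le fun y => iSup_le fun _ => iSup_le fun hyx => ?_
    exact le_iSup_of_le y (le_iSup_of_le (mem_univ y) (le_iSup_of_le hyx le_rfl))


end
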